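/- (Repair bandwidth for multiple failures.) For every field F, all integers d ≥ 1, 1 ≤ m ≤ d and 1 ≤ e ≤ d, and every e × d matrix Ψ_E over F of rank e with rows ψ^{(1)},…,ψ^{(e)} ∈ F^d, the rank of the concatenated repair matrix Ξ^{E,m} = [Ξ^{ψ^{(1)},m} | Ξ^{ψ^{(2)},m} | … | Ξ^{ψ^{(e)},m}] (the matrix with rows indexed by m-element subsets of {1,…,d} obtained by horizontally concatenating the e repair-encoder matrices) is at most C(d,m) − C(d−e,m). -/

import Mathlib

/-- `ind S x = |{y ∈ S : y ≤ x}|`. -/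
def ind (S : Finset ℕ) (x : ℕ) : ℕ := (S.filter (fun y => y ≤ x)).card

/-- The repair-encoder matrix `Ξ^{ψ,m}`: rows indexed by `m`-element subsets `I` of `{1,…,d}`,
columns indexed by `(m-1)`-element subsets `J` of `{1,…,d}`; entry `(-1)^{ind(I,x)} ψ_x`
if `I = J ∪ {x}` (with `x ∉ J`), and `0` otherwise. -/
def Xi (F : Type*) [Field F] (d m : ℕ) (ψ : ℕ → F) :
    Matrix ↥((Finset.Icc 1 d).powersetCard m) ↥((Finset.Icc 1 d).powersetCard (m - 1)) F :=
  fun I J => ∑ x ∈ I.val \ J.val,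
    if I.val = insert x J.val then (-1 : F) ^ (ind I.val x) * ψ x else 0

open Finset Matrix
lemma filter_downclosed {n : ℕ} (P : Fin n → Prop) [DecidablePred P]
    (hdc : ∀ i j : Fin n, i ≤ j → P j → P i) (j : Fin n) :
    P j ↔ (j : ℕ) < (Finset.univ.filter P).card := by
  constructor
  · intro hj
    have hsub : Finset.Iic j ⊆ Finset.univ.filter P := fun i hi => by
      simp only [Finset.mem_Iic] at hi
      simp [Finset.mem_filter, hdc i j hi hj]
    have := Finset.card_le_card hsub
    rw [Fin.card_Iic] at this
    omega
  · intro hj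
    by_contra hP
    have hsub : Finset.univ.filter P ⊆ Finset.Iio j := fun i hi => by
      simp only [Finset.mem_filter] at hi
      simp only [Finset.mem_Iio]
      by_contra hle
      exact hP (hdc j i (le_of_not_gt hle) hi.2)
    have := Finset.card_le_card hsub
    rw [Fin.card_Iio] at this
    omega

lemma lt_iff_lt_q {n : ℕ} {J : Finset ℕ} (hJ : J.card = n) (x : ℕ) (j : Fin n) :
    J.orderEmbOfFin hJ j < x ↔ (j : ℕ) < (J.filter (· < x)).card := by
  have himg : (Finset.univ.filter (fun j : Fin n => J.orderEmbOfFin hJ j < x)).image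
      (J.orderEmbOfFin hJ) = J.filter (· < x) := by
    ext y
    simp only [Finset.mem_image, Finset.mem_filter, Finset.mem_univ, true_and]
    constructor
    · rintro ⟨j, hj, rfl⟩
      exact ⟨Finset.orderEmbOfFin_mem J hJ j, hj⟩
    · rintro ⟨hyJ, hyx⟩
      have : y ∈ Set.range (J.orderEmbOfFin hJ) := by
        rw [Finset.range_orderEmbOfFin]; exact_mod_cast hyJ
      obtain ⟨j, rfl⟩ := this
      exact ⟨j, hyx, rfl⟩
  rw [← himg, Finset.card_image_of_injective _ (J.orderEmbOfFin hJ).injective]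
  exact filter_downclosed _ (fun i j hij hj =>
    lt_of_le_of_lt ((J.orderEmbOfFin hJ).monotone hij) hj) j

lemma q_le_n {n : ℕ} {J : Finset ℕ} (hJ : J.card = n) (x : ℕ) :
    (J.filter (· < x)).card ≤ n := hJ ▸ Finset.card_filter_le _ _

lemma gt_iff_ge_q {n : ℕ} {J : Finset ℕ} (hJ : J.card = n) {x : ℕ} (hx : x ∉ J) (j : Fin n) :
    x < J.orderEmbOfFin hJ j ↔ (J.filter (· < x)).card ≤ (j : ℕ) := by
  have hne : J.orderEmbOfFin hJ j ≠ x := fun h => hx (h ▸ Finset.orderEmbOfFin_mem J hJ j)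
  have := lt_iff_lt_q hJ x j
  omega

lemma ind_insert {J : Finset ℕ} {x : ℕ} (hx : x ∉ J) :
    ind (insert x J) x = (J.filter (· < x)).card + 1 := by
  unfold ind
  have h1 : (insert x J).filter (fun y => y ≤ x) = insert x (J.filter (· < x)) := by
    ext y
    simp only [Finset.mem_filter, Finset.mem_insert]
    constructor
    · rintro ⟨(rfl | hyJ), hyx⟩
      · exact Or.inl rfl
      · right; refine ⟨hyJ, lt_of_le_of_ne hyx ?_⟩
        rintro rfl; exact hx hyJ
    · rintro (rfl | ⟨hyJ, hyx⟩)
      · exact ⟨Or.inl rfl, le_refl _⟩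
      · exact ⟨Or.inr hyJ, le_of_lt hyx⟩
  have h2 : x ∉ J.filter (· < x) := by
    simp only [Finset.mem_filter]
    rintro ⟨-, h⟩; exact lt_irrefl _ h
  rw [h1, Finset.card_insert_of_notMem h2]

lemma kappa_eq {n : ℕ} {J : Finset ℕ} (hJ : J.card = n) {x : ℕ} (hx : x ∉ J)
    (hK : (insert x J).card = n + 1) (a : Fin (n + 1)) :
    (insert x J).orderEmbOfFin hK a =
      if ha : (a : ℕ) < (J.filter (· < x)).card then
        J.orderEmbOfFin hJ ⟨a, lt_of_lt_of_le ha (q_le_n hJ x)⟩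
      else if ha2 : (a : ℕ) = (J.filter (· < x)).card then x
      else J.orderEmbOfFin hJ ⟨(a : ℕ) - 1, by
        have h1 := q_le_n hJ x; have h2 := a.isLt; omega⟩ := by
  have hqn : q_le_n hJ x = q_le_n hJ x := rfl
  set q := (J.filter (· < x)).card with hq
  have hqn : q ≤ n := q_le_n hJ x
  set f : Fin (n + 1) → ℕ := fun a =>
    if ha : (a : ℕ) < q then J.orderEmbOfFin hJ ⟨a, lt_of_lt_of_le ha hqn⟩
    else if ha2 : (a : ℕ) = q then x
    else J.orderEmbOfFin hJ ⟨(a : ℕ) - 1, by have h2 := a.isLt; omega⟩ with hf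
  have f_lt : ∀ (a : Fin (n+1)) (ha : (a:ℕ) < q),
      f a = J.orderEmbOfFin hJ ⟨a, lt_of_lt_of_le ha hqn⟩ := fun a ha => dif_pos ha
  have f_eq : ∀ (a : Fin (n+1)), (a:ℕ) = q → f a = x := by
    intro a ha
    simp only [hf]
    rw [dif_neg (by omega)]
    rw [dif_pos ha]
  have f_gt : ∀ (a : Fin (n+1)) (ha : q < (a:ℕ)),
      f a = J.orderEmbOfFin hJ ⟨(a:ℕ)-1, by have := a.isLt; omega⟩ := by
    intro a ha
    simp only [hf]
    rw [dif_neg (by omega), dif_neg (by omega)]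
  have hmem : ∀ a, f a ∈ insert x J := by
    intro a
    rcases Nat.lt_trichotomy (a:ℕ) q with h | h | h
    · rw [f_lt a h]; exact Finset.mem_insert_of_mem (Finset.orderEmbOfFin_mem _ _ _)
    · rw [f_eq a h]; exact Finset.mem_insert_self _ _
    · rw [f_gt a h]; exact Finset.mem_insert_of_mem (Finset.orderEmbOfFin_mem _ _ _)
  have hmono : StrictMono f := by
    intro a b hab
    have hab' : (a : ℕ) < (b : ℕ) := hab
    have han := a.isLt
    have hbn := b.isLt
    rcases Nat.lt_trichotomy (a:ℕ) q with h1 | h1 | h1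
    · rw [f_lt a h1]
      rcases Nat.lt_trichotomy (b:ℕ) q with h2 | h2 | h2
      · rw [f_lt b h2]
        exact (J.orderEmbOfFin hJ).strictMono (by rw [Fin.mk_lt_mk]; omega)
      · rw [f_eq b h2]
        exact (lt_iff_lt_q hJ x _).mpr h1
      · rw [f_gt b h2]
        exact (J.orderEmbOfFin hJ).strictMono (by rw [Fin.mk_lt_mk]; omega)
    · rw [f_eq a h1]
      have h2 : q < (b:ℕ) := by omega
      rw [f_gt b h2]
      exact (gt_iff_ge_q hJ hx _).mpr (by show q ≤ (b:ℕ)-1; omega)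
    · rw [f_gt a h1, f_gt b (by omega)]
      exact (J.orderEmbOfFin hJ).strictMono (by rw [Fin.mk_lt_mk]; omega)
  have := Finset.orderEmbOfFin_unique hK hmem hmono
  exact congrFun this.symm a

lemma kappa_cycle {n : ℕ} {J : Finset ℕ} (hJ : J.card = n) {x : ℕ} (hx : x ∉ J)
    (hK : (insert x J).card = n + 1) (b : Fin (n + 1)) :
    (insert x J).orderEmbOfFin hK
        ((Fin.cycleRange ⟨(J.filter (· < x)).card, Nat.lt_succ_of_le (q_le_n hJ x)⟩)⁻¹ b) =
      (Fin.cons x (fun j => J.orderEmbOfFin hJ j) : Fin (n+1) → ℕ) b := by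
  set q := (J.filter (· < x)).card with hqdef
  have hqn : q ≤ n := q_le_n hJ x
  set p : Fin (n + 1) := ⟨q, Nat.lt_succ_of_le hqn⟩ with hp
  induction b using Fin.cases with
  | zero =>
    have h0 : (Fin.cycleRange p)⁻¹ 0 = p := by
      rw [Equiv.Perm.inv_def, Equiv.symm_apply_eq, Fin.cycleRange_self]
    rw [h0, kappa_eq hJ hx hK, dif_neg (by simp [hp, hqdef]), dif_pos (by simp [hp, hqdef])]
    simp
  | succ j =>
    rcases Nat.lt_or_ge (j : ℕ) q with hj | hj
    · have h1 : (Fin.cycleRange p)⁻¹ j.succ = j.castSucc := by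
        rw [Equiv.Perm.inv_def, Equiv.symm_apply_eq, Fin.cycleRange_of_lt
          (show j.castSucc < p by rw [Fin.lt_def]; exact hj), Fin.coeSucc_eq_succ]
      rw [h1, kappa_eq hJ hx hK, dif_pos (show ((j.castSucc : ℕ)) < q from hj)]
      simp
    · have h1 : (Fin.cycleRange p)⁻¹ j.succ = j.succ := by
        rw [Equiv.Perm.inv_def, Equiv.symm_apply_eq, Fin.cycleRange_of_gt
          (show p < j.succ by rw [Fin.lt_def]; simp [hp]; omega)]
      rw [h1, kappa_eq hJ hx hK, dif_neg (by simp; omega), dif_neg (by simp; omega)]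
      simp only [Fin.cons_succ]
      congr 1

lemma det_updateColumn_sum_gen {F : Type*} [Field F] {k : ℕ} (P : Matrix (Fin k) (Fin k) F)
    (j : Fin k) (s : Finset ℕ) (c : ℕ → F) (w : ℕ → Fin k → F) :
    (P.updateCol j (fun a => ∑ x ∈ s, c x * w x a)).det
      = ∑ x ∈ s, c x * (P.updateCol j (w x)).det := by
  induction s using Finset.induction_on with
  | empty =>
    simp only [Finset.sum_empty]
    exact Matrix.det_eq_zero_of_column_eq_zero j (fun i => by simp [Matrix.updateCol_apply])
  | @insert y s hy ih =>
    have hsplit : (fun a => ∑ x ∈ insert y s, c x * w x a)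
        = (c y • w y) + (fun a => ∑ x ∈ s, c x * w x a) := by
      funext a
      simp [Finset.sum_insert hy]
    rw [hsplit, Matrix.det_updateCol_add, Matrix.det_updateCol_smul, ih,
      Finset.sum_insert hy]

lemma neg_one_ind_det {F : Type*} [Field F] (u : ℕ → ℕ → F) {n : ℕ} (S : Finset ℕ)
    (hS : S.card = n + 1) {J : Finset ℕ} (hJ : J.card = n) {x : ℕ} (hx : x ∉ J)
    (hK : (insert x J).card = n + 1) :
    (-1 : F) ^ (ind (insert x J) x) *
      (Matrix.of fun a b : Fin (n+1) =>
        u (S.orderEmbOfFin hS a) ((insert x J).orderEmbOfFin hK b)).det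
    = - (Matrix.of fun a b : Fin (n+1) => u (S.orderEmbOfFin hS a)
        ((Fin.cons x (fun j => J.orderEmbOfFin hJ j) : Fin (n+1) → ℕ) b)).det := by
  set q := (J.filter (· < x)).card with hq
  set p : Fin (n+1) := ⟨q, Nat.lt_succ_of_le (q_le_n hJ x)⟩ with hp
  set U := Matrix.of fun a b : Fin (n+1) =>
    u (S.orderEmbOfFin hS a) ((insert x J).orderEmbOfFin hK b) with hU
  have hsub : (U.submatrix id ⇑(Fin.cycleRange p)⁻¹)
      = Matrix.of fun a b : Fin (n+1) => u (S.orderEmbOfFin hS a)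
        ((Fin.cons x (fun j => J.orderEmbOfFin hJ j) : Fin (n+1) → ℕ) b) := by
    ext a b
    simp only [Matrix.submatrix_apply, id, Matrix.of_apply, hU]
    rw [kappa_cycle hJ hx hK b]
  have hdet := Matrix.det_permute' (Fin.cycleRange p)⁻¹ U
  rw [hsub] at hdet
  rw [hdet, Equiv.Perm.sign_inv, Fin.sign_cycleRange, ind_insert hx]
  show (-1 : F) ^ (q + 1) * U.det = -(((((-1 : ℤˣ) ^ q : ℤˣ) : ℤ) : F) * U.det)
  simp only [Units.val_pow_eq_pow_val, Units.val_neg, Units.val_one, Int.cast_pow,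
    Int.cast_neg, Int.cast_one, pow_succ]
  ring

lemma sum_xi_det_eq_zero {F : Type*} [Field F] {d n : ℕ} (ψ : ℕ → F) (u : ℕ → ℕ → F)
    (S : Finset ℕ) (hScard : S.card = n + 1)
    (hu : ∀ y ∈ S, ∑ x ∈ Finset.Icc 1 d, ψ x * u y x = 0)
    (J : ↥((Finset.Icc 1 d).powersetCard n)) :
    ∑ I : ↥((Finset.Icc 1 d).powersetCard (n + 1)),
      (Xi F d (n + 1) ψ I J) *
        (Matrix.of fun a b : Fin (n+1) => u (S.orderEmbOfFin hScard a)
          (I.val.orderEmbOfFin (Finset.mem_powersetCard.mp I.property).2 b)).det = 0 := by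
  classical
  obtain ⟨hJsub, hJcard⟩ := Finset.mem_powersetCard.mp J.property
  set v : ↥((Finset.Icc 1 d).powersetCard (n + 1)) → F := fun I =>
    (Matrix.of fun a b : Fin (n+1) => u (S.orderEmbOfFin hScard a)
      (I.val.orderEmbOfFin (Finset.mem_powersetCard.mp I.property).2 b)).det with hv
  set N : ℕ → Matrix (Fin (n+1)) (Fin (n+1)) F := fun x =>
    Matrix.of fun a b : Fin (n+1) => u (S.orderEmbOfFin hScard a)
      ((Fin.cons x (fun j => J.val.orderEmbOfFin hJcard j) : Fin (n+1) → ℕ) b) with hN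
  have expand : ∀ I : ↥((Finset.Icc 1 d).powersetCard (n + 1)),
      Xi F d (n+1) ψ I J * v I = ∑ x ∈ Finset.Icc 1 d \ J.val,
        (if I.val = insert x J.val then ((-1:F)^(ind I.val x) * ψ x) * v I else 0) := by
    intro I
    obtain ⟨hIsub, hIcard⟩ := Finset.mem_powersetCard.mp I.property
    unfold Xi
    rw [Finset.sum_mul]
    simp only [ite_mul, zero_mul]
    apply Finset.sum_subset
    · exact Finset.sdiff_subset_sdiff hIsub (le_refl _)
    · intro x hx hnx
      rw [if_neg]
      intro hins
      obtain ⟨hxIcc, hxJ⟩ := Finset.mem_sdiff.mp hx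
      exact hnx (Finset.mem_sdiff.mpr ⟨hins ▸ Finset.mem_insert_self x J.val, hxJ⟩)
  calc ∑ I, Xi F d (n+1) ψ I J * v I
      = ∑ I, ∑ x ∈ Finset.Icc 1 d \ J.val,
          (if I.val = insert x J.val then ((-1:F)^(ind I.val x) * ψ x) * v I else 0) :=
        Finset.sum_congr rfl (fun I _ => expand I)
    _ = ∑ x ∈ Finset.Icc 1 d \ J.val, ∑ I : ↥((Finset.Icc 1 d).powersetCard (n + 1)),
          (if I.val = insert x J.val then ((-1:F)^(ind I.val x) * ψ x) * v I else 0) :=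
        Finset.sum_comm
    _ = ∑ x ∈ Finset.Icc 1 d \ J.val, -(ψ x * (N x).det) := by
        apply Finset.sum_congr rfl
        intro x hx
        obtain ⟨hxIcc, hxJ⟩ := Finset.mem_sdiff.mp hx
        have hKcard : (insert x J.val).card = n + 1 := by
          rw [Finset.card_insert_of_notMem hxJ, hJcard]
        have hmem : insert x J.val ∈ (Finset.Icc 1 d).powersetCard (n + 1) :=
          Finset.mem_powersetCard.mpr ⟨Finset.insert_subset hxIcc hJsub, hKcard⟩
        rw [Finset.sum_eq_single (⟨insert x J.val, hmem⟩ :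
            ↥((Finset.Icc 1 d).powersetCard (n + 1)))]
        · rw [if_pos rfl]
          have hdet := neg_one_ind_det u S hScard hJcard hxJ
            (Finset.mem_powersetCard.mp hmem).2
          have : v ⟨insert x J.val, hmem⟩ = (Matrix.of fun a b : Fin (n+1) =>
              u (S.orderEmbOfFin hScard a) ((insert x J.val).orderEmbOfFin
                (Finset.mem_powersetCard.mp hmem).2 b)).det := rfl
          rw [this, mul_comm ((-1:F)^(ind (insert x J.val) x)) (ψ x), mul_assoc, hdet, hN]
          ring
        · intro I _ hne
          rw [if_neg]
          intro h
          exact hne (Subtype.ext h)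
        · intro h
          exact absurd (Finset.mem_univ _) h
    _ = -(∑ x ∈ Finset.Icc 1 d \ J.val, ψ x * (N x).det) := by rw [Finset.sum_neg_distrib]
    _ = 0 := by
        rw [Finset.sum_sdiff_eq_sub hJsub]
        have hJzero : ∑ x ∈ J.val, ψ x * (N x).det = 0 := by
          apply Finset.sum_eq_zero
          intro x hxJ
          have : x ∈ Set.range (J.val.orderEmbOfFin hJcard) := by
            rw [Finset.range_orderEmbOfFin]; exact_mod_cast hxJ
          obtain ⟨j₀, hj₀⟩ := this
          have : (N x).det = 0 := by
            apply Matrix.det_zero_of_column_eq (show (0 : Fin (n+1)) ≠ j₀.succ from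
              (Fin.succ_ne_zero j₀).symm)
            intro a
            show u _ ((Fin.cons x (fun j => J.val.orderEmbOfFin hJcard j) : Fin (n+1) → ℕ) 0)
              = u _ ((Fin.cons x (fun j => J.val.orderEmbOfFin hJcard j) : Fin (n+1) → ℕ) j₀.succ)
            rw [Fin.cons_zero, Fin.cons_succ, hj₀]
          rw [this, mul_zero]
        have hIccZero : ∑ x ∈ Finset.Icc 1 d, ψ x * (N x).det = 0 := by
          set P : Matrix (Fin (n+1)) (Fin (n+1)) F := N 0 with hP
          have hNP : ∀ x, N x = P.updateCol 0 (fun a => u (S.orderEmbOfFin hScard a) x) := by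
            intro x
            ext a b
            induction b using Fin.cases with
            | zero => rw [Matrix.updateCol_self]; rfl
            | succ j =>
              rw [Matrix.updateCol_ne (Fin.succ_ne_zero j)]
              rfl
          calc ∑ x ∈ Finset.Icc 1 d, ψ x * (N x).det
              = ∑ x ∈ Finset.Icc 1 d, ψ x *
                  (P.updateCol 0 (fun a => u (S.orderEmbOfFin hScard a) x)).det := by
                apply Finset.sum_congr rfl; intro x _; rw [hNP x]
            _ = (P.updateCol 0 (fun a => ∑ x ∈ Finset.Icc 1 d,
                  ψ x * u (S.orderEmbOfFin hScard a) x)).det :=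
                (det_updateColumn_sum_gen P 0 (Finset.Icc 1 d) ψ
                  (fun x a => u (S.orderEmbOfFin hScard a) x)).symm
            _ = 0 := by
                apply Matrix.det_eq_zero_of_column_eq_zero 0
                intro a
                rw [Matrix.updateCol_self]
                exact hu _ (Finset.orderEmbOfFin_mem S hScard a)
        rw [hJzero, hIccZero, sub_zero, neg_zero]

lemma det_delta {F : Type*} [Field F] (u : ℕ → ℕ → F) (E : Finset ℕ)
    (hu2 : ∀ y x, x ∉ E → u y x = if x = y then 1 else 0)
    {k : ℕ} (S T : Finset ℕ) (hS : S.card = k) (hT : T.card = k)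
    (hTE : ∀ x ∈ T, x ∉ E) :
    (Matrix.of fun a b : Fin k => u (S.orderEmbOfFin hS a) (T.orderEmbOfFin hT b)).det
      = if S = T then 1 else 0 := by
  classical
  by_cases hST : S = T
  · subst hST
    rw [if_pos rfl]
    have hmat : (Matrix.of fun a b : Fin k =>
        u (S.orderEmbOfFin hS a) (S.orderEmbOfFin hT b)) = (1 : Matrix (Fin k) (Fin k) F) := by
      ext a b
      rw [Matrix.of_apply, hu2 _ _ (hTE _ (Finset.orderEmbOfFin_mem S hT b))]
      have hcongr : S.orderEmbOfFin hT = S.orderEmbOfFin hS := rfl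
      by_cases hab : a = b
      · subst hab
        rw [if_pos (by rw [hcongr]), Matrix.one_apply_eq]
      · have hcond : S.orderEmbOfFin hT b ≠ S.orderEmbOfFin hS a := by
          rw [hcongr]
          exact fun h => hab ((S.orderEmbOfFin hS).injective h).symm
        rw [Matrix.one_apply_ne hab, if_neg hcond]
    rw [hmat, Matrix.det_one]
  · rw [if_neg hST]
    have hnsub : ¬ T ⊆ S := by
      intro hsub
      exact hST (Finset.eq_of_subset_of_card_le hsub (by rw [hS, hT])).symm
    obtain ⟨x, hxT, hxS⟩ := Finset.not_subset.mp hnsub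
    have : x ∈ Set.range (T.orderEmbOfFin hT) := by
      rw [Finset.range_orderEmbOfFin]; exact_mod_cast hxT
    obtain ⟨b, hb⟩ := this
    apply Matrix.det_eq_zero_of_column_eq_zero b
    intro a
    rw [Matrix.of_apply, hb, hu2 _ _ (hTE _ hxT), if_neg]
    intro h
    exact hxS (h ▸ Finset.orderEmbOfFin_mem S hS a)

/-- Repair bandwidth for multiple failures: if the `e × d` matrix `Ψ_E` (with entries
`Ψ i x` for `i ∈ Fin e` and column labels `x ∈ {1,…,d}`) has rank `e`, then the horizontal
concatenation `[Ξ^{ψ^{(1)},m} | … | Ξ^{ψ^{(e)},m}]` of the repair-encoder matrices of its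
rows has rank at most `C(d,m) − C(d−e,m)`. -/
theorem concatenated_xi_rank_le (F : Type*) [Field F] (d m e : ℕ) (hd : 1 ≤ d)
    (hm1 : 1 ≤ m) (hmd : m ≤ d) (he1 : 1 ≤ e) (hed : e ≤ d)
    (Ψ : Matrix (Fin e) ℕ F)
    (hrank : (Matrix.of fun (i : Fin e) (x : ↥(Finset.Icc 1 d)) => Ψ i x.val).rank = e) :
    (Matrix.of fun (I : ↥((Finset.Icc 1 d).powersetCard m))
        (c : Fin e × ↥((Finset.Icc 1 d).powersetCard (m - 1))) =>
          Xi F d m (Ψ c.1) I c.2).rank ≤ d.choose m - (d - e).choose m := by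
  classical
  obtain ⟨n, rfl⟩ : ∃ n, m = n + 1 := ⟨m - 1, by omega⟩
  set B : Matrix (Fin e) ↥(Finset.Icc 1 d) F := Matrix.of fun i x => Ψ i x.val with hB
  have hspan : Submodule.span F (Set.range Bᵀ) = ⊤ := by
    apply Submodule.eq_top_of_finrank_eq
    rw [show Set.range Bᵀ = Set.range B.col from rfl, ← Matrix.rank_eq_finrank_span_cols, hrank, Module.finrank_pi]
    simp
  obtain ⟨t, hts, htspan, htli⟩ := exists_linearIndependent F (Set.range Bᵀ)
  have htspan' : Submodule.span F t = ⊤ := by rw [htspan, hspan]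
  set bas : Module.Basis ↥t F (Fin e → F) :=
    Module.Basis.mk htli (by rw [Subtype.range_coe]; exact htspan'.ge) with hbas
  have : Fintype ↥t := FiniteDimensional.fintypeBasisIndex bas
  have hcard_t : Fintype.card ↥t = e := by
    have h1 := Module.finrank_eq_card_basis bas
    rw [Module.finrank_pi, Fintype.card_fin] at h1
    exact h1.symm
  choose pick hpick using (fun v : ↥t => hts v.2)
  set E : Finset ℕ := Finset.image (fun v : ↥t => (pick v).val) Finset.univ with hE
  have hEsub : E ⊆ Finset.Icc 1 d := by
    intro x hx
    obtain ⟨v, -, rfl⟩ := Finset.mem_image.mp hx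
    exact (pick v).2
  have hpick_inj : Function.Injective (fun v : ↥t => (pick v).val) := by
    intro v w h
    have h2 : pick v = pick w := Subtype.ext h
    apply Subtype.ext
    rw [← hpick v, ← hpick w, h2]
  have hEcard : E.card = e := by
    rw [hE, Finset.card_image_of_injective _ hpick_inj, Finset.card_univ, hcard_t]
  set u : ℕ → ℕ → F := fun y x =>
    (if x = y then 1 else 0) -
      (if hy : y ∈ Finset.Icc 1 d then
        ∑ v : ↥t, (bas.repr (Bᵀ ⟨y, hy⟩)) v * (if x = (pick v).val then 1 else 0)
      else 0) with hu
  have H1 : ∀ y ∈ Finset.Icc 1 d, ∀ i : Fin e,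
      ∑ x ∈ Finset.Icc 1 d, Ψ i x * u y x = 0 := by
    intro y hy i
    have expand : ∀ x ∈ Finset.Icc 1 d, Ψ i x * u y x =
        (if x = y then Ψ i x else 0) -
          ∑ v : ↥t, (bas.repr (Bᵀ ⟨y, hy⟩)) v * (if x = (pick v).val then Ψ i x else 0) := by
      intro x _
      rw [hu]
      simp only [dif_pos hy]
      rw [mul_sub, Finset.mul_sum]
      congr 1
      · by_cases h : x = y <;> simp [h]
      · apply Finset.sum_congr rfl
        intro v _
        by_cases h : x = (pick v).val <;> simp [h] <;> ring
    rw [Finset.sum_congr rfl expand, Finset.sum_sub_distrib,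
      Finset.sum_ite_eq' (Finset.Icc 1 d) y (fun x => Ψ i x), if_pos hy, Finset.sum_comm]
    have step2 : ∀ v : ↥t, ∑ x ∈ Finset.Icc 1 d,
        (bas.repr (Bᵀ ⟨y, hy⟩)) v * (if x = (pick v).val then Ψ i x else 0)
        = (bas.repr (Bᵀ ⟨y, hy⟩)) v * (v : Fin e → F) i := by
      intro v
      rw [← Finset.mul_sum, Finset.sum_ite_eq' (Finset.Icc 1 d) ((pick v).val)
        (fun x => Ψ i x), if_pos (pick v).2]
      congr 1
      exact congrFun (hpick v) i
    rw [Finset.sum_congr rfl (fun v _ => step2 v)]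
    have hfinal : ∑ v : ↥t, (bas.repr (Bᵀ ⟨y, hy⟩)) v * (v : Fin e → F) i = Ψ i y := by
      have hsum := congrFun (Module.Basis.sum_repr bas (Bᵀ ⟨y, hy⟩)) i
      rw [Finset.sum_apply] at hsum
      simp only [Pi.smul_apply, smul_eq_mul, hbas, Module.Basis.mk_apply] at hsum
      exact hsum
    rw [hfinal, sub_self]
  have H2 : ∀ y x, x ∉ E → u y x = if x = y then 1 else 0 := by
    intro y x hx
    have hzero : ∀ hy : y ∈ Finset.Icc 1 d,
        ∑ v : ↥t, (bas.repr (Bᵀ ⟨y, hy⟩)) v * (if x = (pick v).val then 1 else 0) = 0 := by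
      intro hy
      apply Finset.sum_eq_zero
      intro v _
      rw [if_neg, mul_zero]
      intro hxv
      exact hx (hxv ▸ Finset.mem_image_of_mem _ (Finset.mem_univ v))
    rw [hu]
    simp only
    by_cases hy : y ∈ Finset.Icc 1 d
    · rw [dif_pos hy, hzero hy, sub_zero]
    · rw [dif_neg hy, sub_zero]
  -- Step 2: the null-space family
  set D : Finset ℕ := Finset.Icc 1 d \ E with hD
  have hDcard : D.card = d - e := by
    rw [hD, Finset.card_sdiff_of_subset hEsub, Nat.card_Icc, hEcard]
    omega
  have hDsub : D ⊆ Finset.Icc 1 d := Finset.sdiff_subset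
  set M := Matrix.of fun (I : ↥((Finset.Icc 1 d).powersetCard (n+1)))
      (c : Fin e × ↥((Finset.Icc 1 d).powersetCard (n+1-1))) =>
        Xi F d (n+1) (Ψ c.1) I c.2 with hM
  have hPmem : ∀ S : ↥(D.powersetCard (n+1)),
      S.val ∈ (Finset.Icc 1 d).powersetCard (n+1) := by
    intro S
    obtain ⟨h1, h2⟩ := Finset.mem_powersetCard.mp S.2
    exact Finset.mem_powersetCard.mpr ⟨h1.trans hDsub, h2⟩
  set vfam : ↥(D.powersetCard (n+1)) → (↥((Finset.Icc 1 d).powersetCard (n+1)) → F) :=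
    fun S I => (Matrix.of fun a b : Fin (n+1) =>
      u (S.val.orderEmbOfFin (Finset.mem_powersetCard.mp S.2).2 a)
        (I.val.orderEmbOfFin (Finset.mem_powersetCard.mp I.2).2 b)).det with hvfam
  have hker : ∀ S, vfam S ∈ LinearMap.ker (Matrix.mulVecLin Mᵀ) := by
    intro S
    rw [LinearMap.mem_ker]
    funext c
    show ∑ I, Mᵀ c I * vfam S I = 0
    exact sum_xi_det_eq_zero (Ψ c.1) u S.val (Finset.mem_powersetCard.mp S.2).2
      (fun y hy => H1 y (hDsub ((Finset.mem_powersetCard.mp S.2).1 hy)) c.1) c.2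
  have hli : LinearIndependent F vfam := by
    rw [Fintype.linearIndependent_iff]
    intro g hg S₀
    have hdelta : ∀ S : ↥(D.powersetCard (n+1)), vfam S ⟨S₀.val, hPmem S₀⟩
        = if S = S₀ then 1 else 0 := by
      intro S
      have h := det_delta u E H2 S.val S₀.val (Finset.mem_powersetCard.mp S.2).2
        (Finset.mem_powersetCard.mp (hPmem S₀)).2
        (fun x hx => (Finset.mem_sdiff.mp ((Finset.mem_powersetCard.mp S₀.2).1 hx)).2)
      rw [hvfam]
      simp only
      rw [h]
      by_cases hSS : S = S₀
      · rw [if_pos hSS, if_pos (by rw [hSS])]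
      · rw [if_neg hSS, if_neg (fun hv => hSS (Subtype.ext hv))]
    have heval := congrFun hg ⟨S₀.val, hPmem S₀⟩
    rw [Finset.sum_apply] at heval
    simp only [Pi.smul_apply, smul_eq_mul] at heval
    rw [Finset.sum_congr rfl (fun S _ => by rw [hdelta S])] at heval
    simp only [mul_ite, mul_one, mul_zero] at heval
    rw [Finset.sum_ite_eq' Finset.univ S₀ (fun S => g S), if_pos (Finset.mem_univ S₀)] at heval
    exact heval
  -- Step 3: rank bound
  have hft : FiniteDimensional F (↥((Finset.Icc 1 d).powersetCard (n+1)) → F) := by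
    infer_instance
  have hli2 : LinearIndependent F
      (fun S => (⟨vfam S, hker S⟩ : LinearMap.ker (Matrix.mulVecLin Mᵀ))) := by
    apply LinearIndependent.of_comp (LinearMap.ker (Matrix.mulVecLin Mᵀ)).subtype
    exact hli
  have hkerge : (d - e).choose (n+1)
      ≤ Module.finrank F (LinearMap.ker (Matrix.mulVecLin Mᵀ)) := by
    have hcard := hli2.fintype_card_le_finrank
    rwa [Fintype.card_coe, Finset.card_powersetCard, hDcard] at hcard
  have hrn : Mᵀ.rank + Module.finrank F (LinearMap.ker (Matrix.mulVecLin Mᵀ))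
      = d.choose (n+1) := by
    have hrnk := LinearMap.finrank_range_add_finrank_ker (Matrix.mulVecLin Mᵀ)
    rw [Module.finrank_pi, Fintype.card_coe, Finset.card_powersetCard, Nat.card_Icc] at hrnk
    rw [Matrix.rank, hrnk]
    norm_num
  have htr : M.rank = Mᵀ.rank := (Matrix.rank_transpose M).symm
  omega
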